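/- In the coupled SJF/SRPT systems at a common frontier start time τ with common previous frontier value, if a job j satisfies w_j ≥ F_p(τ) where F_p(τ) > F(τ) would hold, then w_j(τ) = w_j and v_j(τ) = w_j; consequently ⟨χ 1_{[F_p(τ),∞)}, Z(τ)⟩ = ⟨χ 1_{[F_p(τ),∞)}, Z_p(τ)⟩, and combining with the above-frontier workload identities forces ⟨χ 1_{[F(τ),F_p(τ))}, Z(τ)⟩ = 0, contradicting the presence of a frontier job of size F(τ); hence F(τ) = F_p(τ). -/

import Mathlib

/-- final step of Lemma 3.5: at a common frontier start time τ,
jobs of size ≥ F_p(τ) are untouched under both policies, so the above-F_p(τ)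
workloads of Z and Z_p agree; combined with the above-frontier workload
identities (both equal to W(τ)) and the presence of frontier jobs of sizes
F(τ) and F_p(τ), this forces F(τ) = F_p(τ). -/
theorem stmt18 {ι : Type*} [DecidableEq ι]
    (arrived : ℝ → Finset ι) (w : ι → ℝ)
    (wres v : ι → ℝ → ℝ) (F Fp W : ℝ → ℝ) (τ : ℝ)
    (huntouchedZ : ∀ j ∈ arrived τ, F τ < w j → wres j τ = w j)
    (huntouchedZp : ∀ j ∈ arrived τ, Fp τ < w j → v j τ = w j)
    (hmonoZ : ∀ j ∈ arrived τ, wres j τ ≤ w j)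
    (hmonoZp : ∀ j ∈ arrived τ, v j τ ≤ w j)
    (habove : (∑ j ∈ arrived τ, if F τ ≤ wres j τ then wres j τ else 0) = W τ)
    (habovep : (∑ j ∈ arrived τ, if Fp τ ≤ v j τ then v j τ else 0) = W τ)
    (hfrontjob : ∃ j ∈ arrived τ, w j = F τ ∧ wres j τ = w j ∧ 0 < w j)
    (hfrontjobp : ∃ j ∈ arrived τ, w j = Fp τ ∧ v j τ = w j ∧ 0 < w j)
    (hnonneg : ∀ j ∈ arrived τ, 0 ≤ wres j τ ∧ 0 ≤ v j τ) :
    F τ = Fp τ := by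
  rcases lt_trichotomy (F τ) (Fp τ) with hlt | heq | hgt
  · -- case F τ < Fp τ : contradiction
    exfalso
    -- above-Fp workload of Z dominates that of Z_p
    have key : W τ ≤ ∑ j ∈ arrived τ, if Fp τ ≤ wres j τ then wres j τ else 0 := by
      rw [← habovep]
      refine Finset.sum_le_sum ?_
      intro j hj
      by_cases hv : Fp τ ≤ v j τ
      · have hwj : F τ < w j := lt_of_lt_of_le hlt (le_trans hv (hmonoZp j hj))
        have hres : wres j τ = w j := huntouchedZ j hj hwj
        have : Fp τ ≤ wres j τ := by rw [hres]; exact le_trans hv (hmonoZp j hj)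
        simp only [hv, this, if_true]
        rw [hres]; exact hmonoZp j hj
      · simp only [hv, if_neg, if_false]
        split
        · exact (hnonneg j hj).1
        · exact le_refl 0
    -- the middle-band sum is nonnegative termwise and ≥ F τ via the frontier job
    obtain ⟨j0, hj0, hw0, hwres0, hpos0⟩ := hfrontjob
    have hband : (F τ : ℝ) ≤ ∑ j ∈ arrived τ,
        ((if F τ ≤ wres j τ then wres j τ else 0) - (if Fp τ ≤ wres j τ then wres j τ else 0)) := by
      refine Finset.single_le_sum (f := fun j =>
        (if F τ ≤ wres j τ then wres j τ else 0) - (if Fp τ ≤ wres j τ then wres j τ else 0))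
        ?_ hj0 |>.trans_eq' ?_
      · intro j hj
        by_cases h1 : F τ ≤ wres j τ
        · by_cases h2 : Fp τ ≤ wres j τ
          · simp [h1, h2]
          · simp only [h1, h2, if_true, if_false, sub_zero]
            exact (hnonneg j hj).1
        · have h2 : ¬ Fp τ ≤ wres j τ := fun h => h1 (le_trans hlt.le h)
          simp [h1, h2]
      · have h1 : F τ ≤ wres j0 τ := by rw [hwres0, hw0]
        have h2 : ¬ Fp τ ≤ wres j0 τ := by rw [hwres0, hw0]; exact not_le.mpr hlt
        rw [if_pos h1, if_neg h2, sub_zero, hwres0, hw0]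
    rw [Finset.sum_sub_distrib, habove] at hband
    have : (F τ : ℝ) ≤ 0 := hband.trans (by linarith)
    exact absurd this (not_le.mpr (hw0 ▸ hpos0))
  · exact heq
  · -- case Fp τ < F τ : contradiction
    exfalso
    have key : W τ ≤ ∑ j ∈ arrived τ, if F τ ≤ v j τ then v j τ else 0 := by
      rw [← habove]
      refine Finset.sum_le_sum ?_
      intro j hj
      by_cases hv : F τ ≤ wres j τ
      · have hwj : Fp τ < w j := lt_of_lt_of_le hgt (le_trans hv (hmonoZ j hj))
        have hres : v j τ = w j := huntouchedZp j hj hwj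
        have : F τ ≤ v j τ := by rw [hres]; exact le_trans hv (hmonoZ j hj)
        simp only [hv, this, if_true]
        rw [hres]; exact hmonoZ j hj
      · simp only [hv, if_false]
        split
        · exact (hnonneg j hj).2
        · exact le_refl 0
    obtain ⟨j0, hj0, hw0, hv0, hpos0⟩ := hfrontjobp
    have hband : (Fp τ : ℝ) ≤ ∑ j ∈ arrived τ,
        ((if Fp τ ≤ v j τ then v j τ else 0) - (if F τ ≤ v j τ then v j τ else 0)) := by
      refine Finset.single_le_sum (f := fun j =>
        (if Fp τ ≤ v j τ then v j τ else 0) - (if F τ ≤ v j τ then v j τ else 0))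
        ?_ hj0 |>.trans_eq' ?_
      · intro j hj
        by_cases h1 : Fp τ ≤ v j τ
        · by_cases h2 : F τ ≤ v j τ
          · simp [h1, h2]
          · simp only [h1, h2, if_true, if_false, sub_zero]
            exact (hnonneg j hj).2
        · have h2 : ¬ F τ ≤ v j τ := fun h => h1 (le_trans hgt.le h)
          simp [h1, h2]
      · have h1 : Fp τ ≤ v j0 τ := by rw [hv0, hw0]
        have h2 : ¬ F τ ≤ v j0 τ := by rw [hv0, hw0]; exact not_le.mpr hgt
        rw [if_pos h1, if_neg h2, sub_zero, hv0, hw0]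
    rw [Finset.sum_sub_distrib, habovep] at hband
    have : (Fp τ : ℝ) ≤ 0 := hband.trans (by linarith)
    exact absurd this (not_le.mpr (hw0 ▸ hpos0))
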